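/- Let r ≥ 3 be an integer and let P^r = { (d₃(G), d₄(G)) : G a nonempty finite simple r-regular graph } ⊂ ℝ². Then the closure of P^r in ℝ² is a convex set. -/

import Mathlib

open SimpleGraph

noncomputable def cycleCount {V : Type*} (G : SimpleGraph V) (k : ℕ) : ℕ :=
  Nat.card ((x : V) × {p : G.Walk x x // p.IsCycle ∧ p.length = k}) / (2 * k)

noncomputable def cycleDensity {V : Type*} (G : SimpleGraph V) (k : ℕ) : ℝ :=
  (cycleCount G k : ℝ) / (Nat.card V : ℝ)

def IsRegularGraph {V : Type*} (G : SimpleGraph V) (r : ℕ) : Prop :=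
  ∀ v : V, Nat.card (G.neighborSet v) = r

namespace CycAux

variable {V : Type*} {G : SimpleGraph V}

lemma walk_ext {u v : V} (p : G.Walk u v) : ∀ (q : G.Walk u v), p.length = q.length →
    (∀ i, p.getVert i = q.getVert i) → p = q := by
  induction p with
  | nil =>
    intro q hl _
    cases q with
    | nil => rfl
    | cons h p => simp at hl
  | cons h p ih =>
    intro q hl hg
    cases q with
    | nil => simp at hl
    | cons h' q' =>
      have h1 := hg 1
      simp only [Walk.getVert_cons_succ, Walk.getVert_zero] at h1
      subst h1
      have := ih q' (by simpa using hl) (fun i => by simpa using hg (i + 1))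
      subst this
      rfl

lemma support_eq_map_range {u v : V} (p : G.Walk u v) :
    p.support = (List.range (p.length + 1)).map p.getVert := by
  induction p with
  | nil => simp [Walk.getVert]
  | cons h p ih =>
    rw [Walk.support_cons, ih, Walk.length_cons]
    simp [List.range_succ_eq_map, List.map_map, Function.comp_def]

/-- Build a walk following `f 0, f 1, ..., f m`. -/
def buildW (f : ℕ → V) (h : ∀ i, G.Adj (f i) (f (i + 1))) : (m : ℕ) → G.Walk (f 0) (f m)
  | 0 => Walk.nil
  | m + 1 => (buildW f h m).append (Walk.cons (h m) Walk.nil)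

@[simp] lemma buildW_length (f : ℕ → V) (h : ∀ i, G.Adj (f i) (f (i + 1))) (m : ℕ) :
    (buildW (G := G) f h m).length = m := by
  induction m with
  | zero => rfl
  | succ m ih => simp [buildW, Walk.length_append, ih]

lemma buildW_getVert (f : ℕ → V) (h : ∀ i, G.Adj (f i) (f (i + 1))) {m i : ℕ} (hi : i ≤ m) :
    (buildW (G := G) f h m).getVert i = f i := by
  induction m with
  | zero => interval_cases i; simp [buildW]
  | succ m ih =>
    rw [buildW, Walk.getVert_append, buildW_length]
    rcases lt_or_ge i m with hlt | hge
    · rw [if_pos hlt, ih (by omega)]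
    · rw [if_neg (by omega)]
      rcases (by omega : i = m ∨ i = m + 1) with rfl | rfl
      · simp
      · have : m + 1 - m = 1 := by omega
        rw [this]
        simp [Walk.getVert]

/-- cyclic-sequence model of rooted `k`-cycles -/
def IsCyc (G : SimpleGraph V) (k : ℕ) (f : ZMod k → V) : Prop :=
  (∀ i, G.Adj (f i) (f (i + 1))) ∧ Function.Injective f

abbrev Cyc (G : SimpleGraph V) (k : ℕ) : Type _ := {f : ZMod k → V // IsCyc G k f}

abbrev RC (G : SimpleGraph V) (k : ℕ) : Type _ :=
  (x : V) × {p : G.Walk x x // p.IsCycle ∧ p.length = k}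

lemma tail_support_eq {x : V} (p : G.Walk x x) :
    p.support.tail = (List.range p.length).map (fun t => p.getVert (t + 1)) := by
  rw [support_eq_map_range, List.range_succ_eq_map]
  simp [List.map_map, Function.comp_def]

lemma getVert_injOn_of_cycle {x : V} {p : G.Walk x x} (hc : p.IsCycle) {a b : ℕ}
    (ha : 1 ≤ a) (ha' : a ≤ p.length) (hb : 1 ≤ b) (hb' : b ≤ p.length)
    (h : p.getVert a = p.getVert b) : a = b := by
  have ht := hc.support_nodup
  rw [tail_support_eq] at ht
  have := (List.nodup_map_iff_inj_on List.nodup_range).mp ht (a - 1)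
    (by rw [List.mem_range]; omega) (b - 1) (by rw [List.mem_range]; omega)
    (by rw [Nat.sub_add_cancel ha, Nat.sub_add_cancel hb]; exact h)
  omega

lemma edges_eq_map_range {u v : V} (p : G.Walk u v) :
    p.edges = (List.range p.length).map (fun t => s(p.getVert t, p.getVert (t + 1))) := by
  induction p with
  | nil => simp
  | cons h p ih =>
    rw [Walk.edges_cons, ih, Walk.length_cons, List.range_succ_eq_map]
    simp [List.map_map, Function.comp_def, Walk.getVert_cons_succ, Walk.getVert_zero]

section

variable {k : ℕ}

lemma natCast_inj_of_le {t s : ℕ} (hk : 0 < k) (ht : 1 ≤ t) (ht' : t ≤ k)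
    (hs : 1 ≤ s) (hs' : s ≤ k) (h : (t : ZMod k) = (s : ZMod k)) : t = s := by
  rw [ZMod.natCast_eq_natCast_iff'] at h
  by_cases h1 : t = k <;> by_cases h2 : s = k
  · omega
  · subst h1; rw [Nat.mod_self, Nat.mod_eq_of_lt (by omega)] at h; omega
  · subst h2; rw [Nat.mod_self, Nat.mod_eq_of_lt (by omega)] at h; omega
  · rw [Nat.mod_eq_of_lt (by omega), Nat.mod_eq_of_lt (by omega)] at h; omega

lemma natCast_inj_lt {t s : ℕ} (ht : t < k) (hs : s < k) (h : (t : ZMod k) = (s : ZMod k)) :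
    t = s := by
  haveI : NeZero k := ⟨by omega⟩
  rw [← ZMod.val_cast_of_lt ht, ← ZMod.val_cast_of_lt hs, h]

lemma toCyc_isCyc (hk : 3 ≤ k) {x : V} {p : G.Walk x x} (hc : p.IsCycle) (hl : p.length = k) :
    IsCyc G k (fun i : ZMod k => p.getVert i.val) := by
  haveI : NeZero k := ⟨by omega⟩
  haveI : Fact (1 < k) := ⟨by omega⟩
  have hgk : p.getVert k = p.getVert 0 := by rw [← hl]; simp
  constructor
  · intro i
    have hik : i.val < k := ZMod.val_lt i
    have hadj := p.adj_getVert_succ (i := i.val) (by omega)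
    have hv : (i + 1).val = (i.val + 1) % k := by rw [ZMod.val_add, ZMod.val_one]
    rcases lt_or_ge (i.val + 1) k with h1 | h1
    · simp only [hv, Nat.mod_eq_of_lt h1]
      exact hadj
    · have hik1 : i.val + 1 = k := by omega
      have h0 : (i + 1).val = 0 := by rw [hv, hik1, Nat.mod_self]
      simp only [h0]
      rw [← hgk]
      rwa [hik1] at hadj
  · intro i j hij
    have hik := ZMod.val_lt i
    have hjk := ZMod.val_lt j
    simp only at hij
    apply ZMod.val_injective
    by_cases hi0 : i.val = 0 <;> by_cases hj0 : j.val = 0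
    · omega
    · exfalso
      have : p.getVert k = p.getVert j.val := by rw [hgk, ← hi0]; exact hij
      have := getVert_injOn_of_cycle hc (by omega) (by omega) (by omega) (by omega) this
      omega
    · exfalso
      have : p.getVert i.val = p.getVert k := by rw [hgk, ← hj0]; exact hij
      have := getVert_injOn_of_cycle hc (by omega) (by omega) (by omega) (by omega) this
      omega
    · exact getVert_injOn_of_cycle hc (by omega) (by omega) (by omega) (by omega) hij

lemma exists_walk_of_isCyc (hk : 3 ≤ k) {G : SimpleGraph V} (f : ZMod k → V)
    (hf : IsCyc G k f) :
    ∃ (p : G.Walk (f 0) (f 0)), p.IsCycle ∧ p.length = k ∧ ∀ i ≤ k, p.getVert i = f i := by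
  haveI : NeZero k := ⟨by omega⟩
  set fN : ℕ → V := fun n => f n with hfN
  have hN : ∀ n, G.Adj (fN n) (fN (n + 1)) := by
    intro n
    simpa [hfN, Nat.cast_add] using hf.1 n
  have h0 : fN 0 = f 0 := by simp [hfN]
  have hk0 : fN k = f 0 := by simp [hfN, ZMod.natCast_self]
  -- the walk
  refine ⟨(buildW fN hN k).copy h0 hk0, ?_, ?_, ?_⟩
  · -- IsCycle
    have hlen : ((buildW (G := G) fN hN k).copy h0 hk0).length = k := by
      simp [Walk.length_copy]
    have hgv : ∀ i, i ≤ k → ((buildW (G := G) fN hN k).copy h0 hk0).getVert i = fN i := by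
      intro i hi
      rw [Walk.getVert_copy]
      exact buildW_getVert fN hN hi
    -- injectivity of fN on [1, k]
    have hinj : ∀ t s : ℕ, 1 ≤ t → t ≤ k → 1 ≤ s → s ≤ k → fN t = fN s → t = s := by
      intro t s ht ht' hs hs' h
      exact natCast_inj_of_le (by omega) ht ht' hs hs' (hf.2 h)
    refine ⟨⟨⟨?_⟩, ?_⟩, ?_⟩
    · -- edges nodup
      rw [edges_eq_map_range]
      rw [List.nodup_map_iff_inj_on List.nodup_range]
      intro t ht s hs h
      rw [List.mem_range, hlen] at ht hs
      rw [hgv t (by omega), hgv s (by omega), hgv (t+1) (by omega), hgv (s+1) (by omega)] at h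
      rw [Sym2.eq_iff] at h
      rcases h with ⟨h1, _⟩ | ⟨h1, h2⟩
      · exact natCast_inj_lt ht hs (hf.2 (show f t = f s from h1))
      · exfalso
        simp only [hfN] at h1 h2
        have e1 : (t : ZMod k) = ((s + 1 : ℕ) : ZMod k) := hf.2 h1
        have e2 : ((t + 1 : ℕ) : ZMod k) = (s : ZMod k) := hf.2 h2
        push_cast at e1 e2
        rw [← e2, add_assoc] at e1
        have e3 := left_eq_add.mp e1
        have e4 : ((2 : ℕ) : ZMod k) = 0 := by push_cast; linear_combination e3
        rw [ZMod.natCast_eq_zero_iff] at e4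
        have := Nat.le_of_dvd (by norm_num) e4
        omega
    · -- not nil
      intro hnil
      have : ((buildW (G := G) fN hN k).copy h0 hk0).length = 0 := by rw [hnil]; rfl
      omega
    · -- support tail nodup
      rw [tail_support_eq]
      rw [List.nodup_map_iff_inj_on List.nodup_range]
      intro t ht s hs h
      rw [List.mem_range, hlen] at ht hs
      rw [hgv (t+1) (by omega), hgv (s+1) (by omega)] at h
      have := hinj (t+1) (s+1) (by omega) (by omega) (by omega) (by omega) h
      omega
  · simp [Walk.length_copy]
  · intro i hi
    rw [Walk.getVert_copy]
    exact buildW_getVert fN hN hi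

end

lemma card_RC_eq_card_Cyc (G : SimpleGraph V) {k : ℕ} (hk : 3 ≤ k) :
    Nat.card (RC G k) = Nat.card (Cyc G k) := by
  haveI : NeZero k := ⟨by omega⟩
  apply Nat.card_eq_of_bijective
    (f := fun z : RC G k =>
      (⟨fun i => z.2.1.getVert i.val, toCyc_isCyc hk z.2.2.1 z.2.2.2⟩ : Cyc G k))
  constructor
  · rintro ⟨x1, p1, hc1, hl1⟩ ⟨x2, p2, hc2, hl2⟩ h
    simp only [Subtype.mk.injEq] at h
    have hx : x1 = x2 := by
      have := congrFun h 0
      simpa using this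
    subst hx
    have hp : p1 = p2 := by
      apply walk_ext
      · rw [hl1, hl2]
      · intro i
        rcases lt_or_ge i k with hi | hi
        · have := congrFun h (i : ZMod k)
          simpa [ZMod.val_cast_of_lt hi] using this
        · rw [p1.getVert_of_length_le (by omega), p2.getVert_of_length_le (by omega)]
    subst hp
    rfl
  · rintro ⟨f, hf⟩
    obtain ⟨p, hc, hl, hgv⟩ := exists_walk_of_isCyc hk f hf
    refine ⟨⟨f 0, p, hc, hl⟩, ?_⟩
    apply Subtype.ext
    funext i
    have h1 : p.getVert i.val = f i.val := hgv i.val (le_of_lt (ZMod.val_lt i))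
    simp only [h1]
    congr 1
    simp [ZMod.natCast_val, ZMod.cast_id]

/-! ### The dihedral group action and divisibility -/

def dihSmul {k : ℕ} (g : DihedralGroup k) (f : ZMod k → V) : ZMod k → V :=
  match g with
  | .r i => fun x => f (x + i)
  | .sr i => fun x => f (i - x)

lemma isCyc_dihSmul {G : SimpleGraph V} {k : ℕ} (g : DihedralGroup k) {f : ZMod k → V}
    (hf : IsCyc G k f) : IsCyc G k (dihSmul g f) := by
  cases g with
  | r i =>
    constructor
    · intro x
      have := hf.1 (x + i)
      simpa [dihSmul, add_right_comm] using this
    · intro a b hab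
      simp only [dihSmul] at hab
      have := hf.2 hab
      exact add_right_cancel this
  | sr i =>
    constructor
    · intro x
      have := (hf.1 (i - x - 1)).symm
      have e : i - x - 1 + 1 = i - x := by ring
      rw [e] at this
      have e2 : i - (x + 1) = i - x - 1 := by ring
      simpa [dihSmul, e2] using this
    · intro a b hab
      simp only [dihSmul] at hab
      have := hf.2 hab
      have : i - (i - a) = i - (i - b) := by rw [this]
      simpa using this

instance cycAction {k : ℕ} {G : SimpleGraph V} : MulAction (DihedralGroup k) (Cyc G k) where
  smul g F := ⟨dihSmul g F.1, isCyc_dihSmul g F.2⟩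
  one_smul F := by
    apply Subtype.ext
    funext x
    show dihSmul 1 F.1 x = F.1 x
    simp [-DihedralGroup.r_zero, DihedralGroup.one_def, dihSmul]
  mul_smul g h F := by
    apply Subtype.ext
    funext x
    show dihSmul (g * h) F.1 x = dihSmul g (dihSmul h F.1) x
    cases g <;> cases h <;> simp [dihSmul] <;> ring_nf

lemma dvd_card_Cyc [Finite V] (G : SimpleGraph V) {k : ℕ} (hk : 3 ≤ k) :
    2 * k ∣ Nat.card (Cyc G k) := by
  haveI : NeZero k := ⟨by omega⟩
  classical
  haveI : Fintype V := Fintype.ofFinite V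
  haveI : Fintype (Cyc G k) := Fintype.ofFinite _
  haveI : Fintype (MulAction.orbitRel.Quotient (DihedralGroup k) (Cyc G k)) :=
    Fintype.ofFinite _
  have hstab : ∀ F : Cyc G k, MulAction.stabilizer (DihedralGroup k) F = ⊥ := by
    intro F
    ext g
    simp only [Subgroup.mem_bot, MulAction.mem_stabilizer_iff]
    constructor
    · intro hg
      have hg' : ∀ x, dihSmul g F.1 x = F.1 x := fun x =>
        congrFun (congrArg Subtype.val hg) x
      cases g with
      | r i =>
        have h0 := F.2.2 (hg' 0)
        simp only [zero_add] at h0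
        rw [show i = 0 from h0]
        rfl
      | sr i =>
        exfalso
        have h0 := F.2.2 (hg' 0)
        have h1 := F.2.2 (hg' 1)
        have h2 : ((2 : ℕ) : ZMod k) = 0 := by
          push_cast
          linear_combination h0 - h1
        rw [ZMod.natCast_eq_zero_iff] at h2
        have := Nat.le_of_dvd (by norm_num) h2
        omega
    · rintro rfl
      exact one_smul _ F
  have hcard := MulAction.card_eq_sum_card_group_div_card_stabilizer (DihedralGroup k)
    (Cyc G k)
  have h1 : ∀ ω : MulAction.orbitRel.Quotient (DihedralGroup k) (Cyc G k),
      Fintype.card (DihedralGroup k) /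
        Fintype.card (MulAction.stabilizer (DihedralGroup k) (Quotient.out ω)) = 2 * k := by
    intro ω
    have e : Fintype.card (MulAction.stabilizer (DihedralGroup k) (Quotient.out ω)) =
        Nat.card (MulAction.stabilizer (DihedralGroup k) (Quotient.out ω)) :=
      (Nat.card_eq_fintype_card).symm
    rw [e, hstab, DihedralGroup.card]
    simp
  rw [Finset.sum_congr rfl (fun ω _ => h1 ω), Finset.sum_const, smul_eq_mul] at hcard
  rw [Nat.card_eq_fintype_card, hcard]
  exact dvd_mul_left _ _

/-! ### Disjoint unions of copies -/

section Mix

variable {W : Type*}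

def mix (G : SimpleGraph V) (H : SimpleGraph W) (a b : ℕ) :
    SimpleGraph ((Fin a × V) ⊕ (Fin b × W)) where
  Adj x y :=
    match x, y with
    | Sum.inl (i, u), Sum.inl (j, v) => i = j ∧ G.Adj u v
    | Sum.inr (i, u), Sum.inr (j, v) => i = j ∧ H.Adj u v
    | _, _ => False
  symm := by
    constructor
    rintro (⟨i, u⟩ | ⟨i, u⟩) (⟨j, v⟩ | ⟨j, v⟩) h
    · exact ⟨h.1.symm, h.2.symm⟩
    · exact h.elim
    · exact h.elim
    · exact ⟨h.1.symm, h.2.symm⟩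
  loopless := by
    constructor
    rintro (⟨i, u⟩ | ⟨i, u⟩) h
    · exact G.loopless.irrefl u h.2
    · exact H.loopless.irrefl u h.2

variable {G : SimpleGraph V} {H : SimpleGraph W} {a b : ℕ}

@[simp] lemma mix_adj_inl_inl {i j u v} :
    (mix G H a b).Adj (Sum.inl (i, u)) (Sum.inl (j, v)) ↔ i = j ∧ G.Adj u v := Iff.rfl

@[simp] lemma mix_adj_inr_inr {i j u v} :
    (mix G H a b).Adj (Sum.inr (i, u)) (Sum.inr (j, v)) ↔ i = j ∧ H.Adj u v := Iff.rfl

@[simp] lemma mix_adj_inl_inr {i j u v} :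
    ¬ (mix G H a b).Adj (Sum.inl (i, u)) (Sum.inr (j, v)) := fun h => h

@[simp] lemma mix_adj_inr_inl {i j u v} :
    ¬ (mix G H a b).Adj (Sum.inr (i, u)) (Sum.inl (j, v)) := fun h => h

/-- the component tag of a vertex of `mix` -/
def tag : (Fin a × V) ⊕ (Fin b × W) → Fin a ⊕ Fin b := Sum.map Prod.fst Prod.fst

lemma tag_eq_of_adj {x y} (h : (mix G H a b).Adj x y) : tag x = tag y := by
  rcases x with ⟨i, u⟩ | ⟨i, u⟩ <;> rcases y with ⟨j, v⟩ | ⟨j, v⟩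
  · exact congrArg Sum.inl h.1
  · exact h.elim
  · exact h.elim
  · exact congrArg Sum.inr h.1

lemma tag_const {k : ℕ} [NeZero k] {f : ZMod k → (Fin a × V) ⊕ (Fin b × W)}
    (hadj : ∀ i, (mix G H a b).Adj (f i) (f (i + 1))) (x : ZMod k) :
    tag (f x) = tag (f 0) := by
  have hN : ∀ n : ℕ, tag (f (n : ZMod k)) = tag (f 0) := by
    intro n
    induction n with
    | zero => norm_num
    | succ n ih =>
      rw [Nat.cast_add, Nat.cast_one, ← ih]
      exact (tag_eq_of_adj (hadj (n : ZMod k))).symm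
  have := hN x.val
  rwa [ZMod.natCast_val, ZMod.cast_id] at this

lemma card_Cyc_mix [Finite V] [Finite W] {k : ℕ} (hk : 3 ≤ k) :
    Nat.card (Cyc (mix G H a b) k) =
      a * Nat.card (Cyc G k) + b * Nat.card (Cyc H k) := by
  haveI : NeZero k := ⟨by omega⟩
  have hbij : Nat.card ((Fin a × Cyc G k) ⊕ (Fin b × Cyc H k)) =
      Nat.card (Cyc (mix G H a b) k) := by
    apply Nat.card_eq_of_bijective (f := fun z =>
      match z with
      | Sum.inl (i, F) => (⟨fun x => Sum.inl (i, F.1 x),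
          fun x => by simp [F.2.1 x],
          fun s t hst => F.2.2 (by
            have := (Sum.inl.injEq _ _).mp hst
            exact (Prod.mk.injEq _ _ _ _).mp this |>.2)⟩ : Cyc (mix G H a b) k)
      | Sum.inr (i, F) => (⟨fun x => Sum.inr (i, F.1 x),
          fun x => by simp [F.2.1 x],
          fun s t hst => F.2.2 (by
            have := (Sum.inr.injEq _ _).mp hst
            exact (Prod.mk.injEq _ _ _ _).mp this |>.2)⟩ : Cyc (mix G H a b) k))
    constructor
    · rintro (⟨i, F⟩ | ⟨i, F⟩) (⟨j, F'⟩ | ⟨j, F'⟩) h <;>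
        replace h := congrArg Subtype.val h
      · have h0 := congrFun h 0
        simp only [Sum.inl.injEq, Prod.mk.injEq] at h0
        obtain ⟨rfl, -⟩ := h0
        have : F = F' := by
          apply Subtype.ext
          funext x
          have hx := congrFun h x
          simp only [Sum.inl.injEq, Prod.mk.injEq] at hx
          exact hx.2
        rw [this]
      · exact absurd (congrFun h 0) (by simp)
      · exact absurd (congrFun h 0) (by simp)
      · have h0 := congrFun h 0
        simp only [Sum.inr.injEq, Prod.mk.injEq] at h0
        obtain ⟨rfl, -⟩ := h0
        have : F = F' := by
          apply Subtype.ext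
          funext x
          have hx := congrFun h x
          simp only [Sum.inr.injEq, Prod.mk.injEq] at hx
          exact hx.2
        rw [this]
    · rintro ⟨f, hf⟩
      rcases h0 : f 0 with ⟨i, u⟩ | ⟨i, u⟩
      · have hex : ∀ x, ∃ v, f x = Sum.inl (i, v) := by
          intro x
          have ht := tag_const hf.1 x
          rw [h0] at ht
          rcases hx : f x with ⟨j, v⟩ | ⟨j, v⟩
          · rw [hx] at ht
            simp only [tag, Sum.map_inl, Sum.inl.injEq] at ht
            exact ⟨v, by rw [ht]⟩
          · rw [hx] at ht
            simp [tag] at ht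
        choose g hg using hex
        have hgadj : ∀ x, G.Adj (g x) (g (x + 1)) := by
          intro x
          have := hf.1 x
          rw [hg x, hg (x + 1)] at this
          exact this.2
        have hginj : Function.Injective g := by
          intro s t hst
          apply hf.2
          rw [hg s, hg t, hst]
        refine ⟨Sum.inl (i, ⟨g, hgadj, hginj⟩), ?_⟩
        apply Subtype.ext
        funext x
        exact (hg x).symm
      · have hex : ∀ x, ∃ v, f x = Sum.inr (i, v) := by
          intro x
          have ht := tag_const hf.1 x
          rw [h0] at ht
          rcases hx : f x with ⟨j, v⟩ | ⟨j, v⟩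
          · rw [hx] at ht
            simp [tag] at ht
          · rw [hx] at ht
            simp only [tag, Sum.map_inr, Sum.inr.injEq] at ht
            exact ⟨v, by rw [ht]⟩
        choose g hg using hex
        have hgadj : ∀ x, H.Adj (g x) (g (x + 1)) := by
          intro x
          have := hf.1 x
          rw [hg x, hg (x + 1)] at this
          exact this.2
        have hginj : Function.Injective g := by
          intro s t hst
          apply hf.2
          rw [hg s, hg t, hst]
        refine ⟨Sum.inr (i, ⟨g, hgadj, hginj⟩), ?_⟩
        apply Subtype.ext
        funext x
        exact (hg x).symm
  rw [← hbij, Nat.card_sum, Nat.card_prod, Nat.card_prod, Nat.card_eq_fintype_card (α := Fin a),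
    Nat.card_eq_fintype_card (α := Fin b), Fintype.card_fin, Fintype.card_fin]

lemma mix_regular {r : ℕ} (hG : IsRegularGraph G r) (hH : IsRegularGraph H r) :
    IsRegularGraph (mix G H a b) r := by
  rintro (⟨i, u⟩ | ⟨i, u⟩)
  · rw [← hG u]
    apply (Nat.card_eq_of_bijective (f := fun z : G.neighborSet u =>
      (⟨Sum.inl (i, z.1), by
        have := z.2
        rw [SimpleGraph.mem_neighborSet] at this ⊢
        exact ⟨rfl, this⟩⟩ : (mix G H a b).neighborSet (Sum.inl (i, u)))) ?_).symm
    constructor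
    · rintro ⟨v, hv⟩ ⟨v', hv'⟩ h
      simp only [Subtype.mk.injEq, Sum.inl.injEq, Prod.mk.injEq] at h
      exact Subtype.ext h.2
    · rintro ⟨(⟨j, v⟩ | ⟨j, v⟩), hw⟩
      · rw [SimpleGraph.mem_neighborSet] at hw
        obtain ⟨rfl, hadj⟩ := hw
        exact ⟨⟨v, hadj⟩, rfl⟩
      · exact absurd hw (by simp)
  · rw [← hH u]
    apply (Nat.card_eq_of_bijective (f := fun z : H.neighborSet u =>
      (⟨Sum.inr (i, z.1), by
        have := z.2
        rw [SimpleGraph.mem_neighborSet] at this ⊢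
        exact ⟨rfl, this⟩⟩ : (mix G H a b).neighborSet (Sum.inr (i, u)))) ?_).symm
    constructor
    · rintro ⟨v, hv⟩ ⟨v', hv'⟩ h
      simp only [Subtype.mk.injEq, Sum.inr.injEq, Prod.mk.injEq] at h
      exact Subtype.ext h.2
    · rintro ⟨(⟨j, v⟩ | ⟨j, v⟩), hw⟩
      · exact absurd hw (by simp)
      · rw [SimpleGraph.mem_neighborSet] at hw
        obtain ⟨rfl, hadj⟩ := hw
        exact ⟨⟨v, hadj⟩, rfl⟩

end Mix

section Count

variable {W : Type*} {G : SimpleGraph V} {H : SimpleGraph W} {a b : ℕ}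

lemma card_RC_eq [Finite V] {k : ℕ} (hk : 3 ≤ k) :
    Nat.card (RC G k) = 2 * k * cycleCount G k := by
  have hdvd : 2 * k ∣ Nat.card (RC G k) := by
    rw [card_RC_eq_card_Cyc G hk]
    exact dvd_card_Cyc G hk
  rw [cycleCount]
  exact (Nat.mul_div_cancel' hdvd).symm

lemma cycleCount_mix [Finite V] [Finite W] {k : ℕ} (hk : 3 ≤ k) :
    cycleCount (mix G H a b) k = a * cycleCount G k + b * cycleCount H k := by
  have h1 : 2 * k * cycleCount (mix G H a b) k =
      2 * k * (a * cycleCount G k + b * cycleCount H k) := by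
    rw [← card_RC_eq (by omega), card_RC_eq_card_Cyc _ hk, card_Cyc_mix hk,
      ← card_RC_eq_card_Cyc G hk, ← card_RC_eq_card_Cyc H hk,
      card_RC_eq (G := G) hk, card_RC_eq (G := H) hk]
    ring
  exact Nat.eq_of_mul_eq_mul_left (by omega) h1

lemma card_mix_vertices [Finite V] [Finite W] :
    Nat.card ((Fin a × V) ⊕ (Fin b × W)) = a * Nat.card V + b * Nat.card W := by
  rw [Nat.card_sum, Nat.card_prod, Nat.card_prod, Nat.card_eq_fintype_card (α := Fin a),
    Nat.card_eq_fintype_card (α := Fin b), Fintype.card_fin, Fintype.card_fin]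

lemma density_combo [Finite V] [Finite W] [Nonempty V] [Nonempty W]
    (M K : ℕ) (hMK : 0 < M + K) {k : ℕ} (hk : 3 ≤ k) :
    cycleDensity (mix G H (M * Nat.card W) (K * Nat.card V)) k
      = ((M : ℝ) / (M + K)) * cycleDensity G k + ((K : ℝ) / (M + K)) * cycleDensity H k := by
  have hV : 0 < Nat.card V := Nat.card_pos
  have hW : 0 < Nat.card W := Nat.card_pos
  unfold cycleDensity
  rw [cycleCount_mix hk, card_mix_vertices]
  have hV' : (Nat.card V : ℝ) ≠ 0 := by positivity
  have hW' : (Nat.card W : ℝ) ≠ 0 := by positivity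
  have hMK' : ((M : ℝ) + K) ≠ 0 := by
    have : (0 : ℝ) < M + K := by exact_mod_cast hMK
    linarith
  push_cast
  rw [show ((M : ℝ) * (Nat.card W) * (Nat.card V) + (K : ℝ) * (Nat.card V) * (Nat.card W))
      = ((M : ℝ) + K) * ((Nat.card V) * (Nat.card W)) by ring]
  field_simp

end Count

end CycAux

namespace CycAux

/-- The set of density pairs of `r`-regular graphs. -/
def P (r : ℕ) : Set (ℝ × ℝ) := {p : ℝ × ℝ | ∃ (V : Type) (G : SimpleGraph V),
  Finite V ∧ Nonempty V ∧ IsRegularGraph G r ∧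
  p = (cycleDensity G 3, cycleDensity G 4)}

lemma combo_mem (r : ℕ) {V W : Type} (G : SimpleGraph V) (H : SimpleGraph W)
    [Finite V] [Finite W] [Nonempty V] [Nonempty W]
    (hG : IsRegularGraph G r) (hH : IsRegularGraph H r) (M K : ℕ) (hMK : 0 < M + K) :
    (((M : ℝ) / (M + K)) • ((cycleDensity G 3, cycleDensity G 4) : ℝ × ℝ)
      + ((K : ℝ) / (M + K)) • ((cycleDensity H 3, cycleDensity H 4) : ℝ × ℝ)) ∈ P r := by
  have hV : 0 < Nat.card V := Nat.card_pos
  have hW : 0 < Nat.card W := Nat.card_pos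
  refine ⟨_, mix G H (M * Nat.card W) (K * Nat.card V), inferInstance, ?_,
    mix_regular hG hH, ?_⟩
  · have hpos : 0 < Nat.card ((Fin (M * Nat.card W) × V) ⊕ (Fin (K * Nat.card V) × W)) := by
      rw [card_mix_vertices]
      rcases (by omega : 0 < M ∨ 0 < K) with hM | hK
      · have := Nat.mul_pos (Nat.mul_pos hM hW) hV
        omega
      · have := Nat.mul_pos (Nat.mul_pos hK hV) hW
        omega
    exact (Nat.card_pos_iff.mp hpos).1
  · have h3 := density_combo (G := G) (H := H) M K hMK (k := 3) (by omega)
    have h4 := density_combo (G := G) (H := H) M K hMK (k := 4) (by omega)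
    rw [Prod.ext_iff]
    constructor
    · simp only [Prod.fst_add, Prod.smul_fst, smul_eq_mul]
      rw [h3]
    · simp only [Prod.snd_add, Prod.smul_snd, smul_eq_mul]
      rw [h4]

open Filter Topology in
lemma segment_mem_closure (r : ℕ) {x y : ℝ × ℝ} (hx : x ∈ P r) (hy : y ∈ P r)
    {a b : ℝ} (ha : 0 ≤ a) (hb : 0 ≤ b) (hab : a + b = 1) :
    a • x + b • y ∈ closure (P r) := by
  obtain ⟨V, G, hVfin, hVne, hGreg, rfl⟩ := hx
  obtain ⟨W, H, hWfin, hWne, hHreg, rfl⟩ := hy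
  haveI := hVfin; haveI := hVne; haveI := hWfin; haveI := hWne
  have ha1 : a ≤ 1 := by linarith
  set c : ℕ → ℝ := fun t => (⌊a * (t + 1)⌋₊ : ℝ) / (t + 1) with hc_def
  have hfloor_le : ∀ t : ℕ, (⌊a * (t + 1)⌋₊ : ℕ) ≤ t + 1 := by
    intro t
    have h1 : a * (t + 1) ≤ ((t + 1 : ℕ) : ℝ) := by
      push_cast
      nlinarith [Nat.cast_nonneg (α := ℝ) t]
    calc ⌊a * (t + 1)⌋₊ ≤ ⌊((t + 1 : ℕ) : ℝ)⌋₊ := Nat.floor_le_floor h1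
      _ = t + 1 := Nat.floor_natCast _
  have hmem : ∀ t : ℕ, (c t) • ((cycleDensity G 3, cycleDensity G 4) : ℝ × ℝ)
      + (1 - c t) • ((cycleDensity H 3, cycleDensity H 4) : ℝ × ℝ) ∈ P r := by
    intro t
    have hmk : (⌊a * (t + 1)⌋₊ + (t + 1 - ⌊a * (t + 1)⌋₊) : ℕ) = t + 1 := by
      have := hfloor_le t
      omega
    have := combo_mem r G H hGreg hHreg ⌊a * (t + 1)⌋₊ (t + 1 - ⌊a * (t + 1)⌋₊)
      (by omega)
    have hcast : ((⌊a * (t + 1)⌋₊ : ℝ) + ((t + 1 - ⌊a * (t + 1)⌋₊ : ℕ) : ℝ)) = (t + 1 : ℝ) := by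
      rw [← Nat.cast_add, hmk]
      push_cast
      ring
    have hKcast : (((t + 1 - ⌊a * (t + 1)⌋₊ : ℕ)) : ℝ) = (t + 1 : ℝ) - ⌊a * (t + 1)⌋₊ := by
      rw [Nat.cast_sub (hfloor_le t)]
      push_cast
      ring
    rw [hcast, hKcast] at this
    have e1 : c t = (⌊a * (t + 1)⌋₊ : ℝ) / (t + 1) := rfl
    have ht1 : ((t : ℝ) + 1) ≠ 0 := by positivity
    have e2 : 1 - c t = ((t + 1 : ℝ) - ⌊a * (t + 1)⌋₊) / (t + 1) := by
      rw [e1]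
      field_simp
    rw [e2, e1]
    exact this
  apply mem_closure_of_tendsto (f := fun t : ℕ =>
    (c t) • ((cycleDensity G 3, cycleDensity G 4) : ℝ × ℝ)
      + (1 - c t) • ((cycleDensity H 3, cycleDensity H 4) : ℝ × ℝ)) (b := atTop)
  · -- tendsto
    have hc : Tendsto c atTop (𝓝 a) := by
      have hlow : Tendsto (fun t : ℕ => a - 1 / (t + 1)) atTop (𝓝 a) := by
        have := tendsto_one_div_add_atTop_nhds_zero_nat (𝕜 := ℝ)
        have h2 := (tendsto_const_nhds (x := a) (f := atTop (α := ℕ))).sub this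
        simpa using h2
      apply tendsto_of_tendsto_of_tendsto_of_le_of_le hlow tendsto_const_nhds
      · intro t
        have hpos : (0 : ℝ) < t + 1 := by positivity
        have h1 : a * (t + 1) - 1 < (⌊a * (t + 1)⌋₊ : ℝ) := Nat.sub_one_lt_floor _
        have h2 : (a - 1 / ((t : ℝ) + 1)) * ((t : ℝ) + 1) = a * ((t : ℝ) + 1) - 1 := by
          field_simp
        rw [hc_def]
        rw [← sub_nonneg]
        have h3 : (⌊a * ((t : ℝ) + 1)⌋₊ : ℝ) / ((t : ℝ) + 1)
            - (a - 1 / ((t : ℝ) + 1)) = ((⌊a * ((t : ℝ) + 1)⌋₊ : ℝ)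
            - (a * ((t : ℝ) + 1) - 1)) / ((t : ℝ) + 1) := by
          field_simp
        rw [h3]
        apply div_nonneg _ (le_of_lt hpos)
        linarith
      · intro t
        have hpos : (0 : ℝ) < t + 1 := by positivity
        have h1 : (⌊a * (t + 1)⌋₊ : ℝ) ≤ a * (t + 1) :=
          Nat.floor_le (by positivity)
        rw [hc_def]
        rw [div_le_iff₀ hpos]
        simpa using h1
    have hc' : Tendsto (fun t => 1 - c t) atTop (𝓝 b) := by
      have := (tendsto_const_nhds (x := (1 : ℝ)) (f := atTop (α := ℕ))).sub hc
      rw [show (1 : ℝ) - a = b by linarith] at this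
      exact this
    exact (hc.smul_const _).add (hc'.smul_const _)
  · exact Filter.Eventually.of_forall hmem

end CycAux

theorem convex_closure_densityPairs (r : ℕ) (hr : 3 ≤ r) :
    Convex ℝ (closure {p : ℝ × ℝ | ∃ (V : Type) (G : SimpleGraph V),
      Finite V ∧ Nonempty V ∧ IsRegularGraph G r ∧
      p = (cycleDensity G 3, cycleDensity G 4)}) := by
  have hPeq : {p : ℝ × ℝ | ∃ (V : Type) (G : SimpleGraph V),
      Finite V ∧ Nonempty V ∧ IsRegularGraph G r ∧
      p = (cycleDensity G 3, cycleDensity G 4)} = CycAux.P r := rfl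
  rw [hPeq]
  intro x hx y hy a b ha hb hab
  have hcont : Continuous (fun q : (ℝ × ℝ) × (ℝ × ℝ) => a • q.1 + b • q.2) :=
    (continuous_fst.const_smul a).add (continuous_snd.const_smul b)
  have h1 : (fun q : (ℝ × ℝ) × (ℝ × ℝ) => a • q.1 + b • q.2) '' (CycAux.P r ×ˢ CycAux.P r)
      ⊆ closure (CycAux.P r) := by
    rintro z ⟨⟨u, v⟩, ⟨hu, hv⟩, rfl⟩
    exact CycAux.segment_mem_closure r hu hv ha hb hab
  have h2 : (x, y) ∈ closure (CycAux.P r ×ˢ CycAux.P r) := by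
    rw [closure_prod_eq]
    exact ⟨hx, hy⟩
  have h3 : a • x + b • y ∈
      closure ((fun q : (ℝ × ℝ) × (ℝ × ℝ) => a • q.1 + b • q.2) '' (CycAux.P r ×ˢ CycAux.P r)) :=
    image_closure_subset_closure_image hcont (Set.mem_image_of_mem _ h2)
  exact closure_minimal h1 isClosed_closure h3
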